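/- With notation as in the discrete Kato inequality setting, the bottom of the spectrum of the combinatorial Laplacian is at most the bottom of the spectrum of the discrete magnetic Laplacian: λ₀(Δ) ≤ λ₀(Δ_σ), where λ₀(A) = inf{ (Af, f)/‖f‖² : f ∈ C⁰₍₂₎(K), f ≠ 0 }. -/

import Mathlib

open ComplexConjugate

noncomputable def combLapC {V : Type*} (G : SimpleGraph V) [G.LocallyFinite]
    (f : V → ℂ) (v : V) : ℂ :=
  ∑ w ∈ G.neighborFinset v, (f v - f w)

noncomputable def magLap {V : Type*} (G : SimpleGraph V) [G.LocallyFinite]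
    (σ : V → V → ℂ) (f : V → ℂ) (v : V) : ℂ :=
  ∑ w ∈ G.neighborFinset v, (f v - σ w v * f w)

noncomputable def bottomSpec {V : Type*} (L : (V → ℂ) → (V → ℂ)) : ℝ :=
  sInf { r : ℝ | ∃ f : V → ℂ, Memℓp f 2 ∧ f ≠ 0 ∧
    r = (∑' v, (L f v * conj (f v)).re) / (∑' v, ‖f v‖ ^ 2) }

section Aux
variable {V : Type*} (G : SimpleGraph V) [G.LocallyFinite]

private lemma lem1 (M : ℕ) (hM : ∀ v, G.degree v ≤ M) (a : V → ℝ) (ha : ∀ v, 0 ≤ a v)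
    (hs : Summable a) (s : Finset V) :
    ∑ v ∈ s, ∑ w ∈ G.neighborFinset v, a w ≤ M * ∑' v, a v := by
  classical
  set T := s.biUnion (fun v => G.neighborFinset v) with hT
  have step1 : ∑ v ∈ s, ∑ w ∈ G.neighborFinset v, a w
      = ∑ v ∈ s, ∑ w ∈ T, if w ∈ G.neighborFinset v then a w else 0 := by
    refine Finset.sum_congr rfl fun v hv => ?_
    rw [← Finset.sum_filter]
    congr 1
    rw [Finset.filter_mem_eq_inter, Finset.inter_eq_right.mpr
      (Finset.subset_biUnion_of_mem _ hv)]
  rw [step1, Finset.sum_comm]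
  have step2 : ∀ w ∈ T, (∑ v ∈ s, if w ∈ G.neighborFinset v then a w else 0) ≤ M * a w := by
    intro w _
    rw [← Finset.sum_filter, Finset.sum_const, nsmul_eq_mul]
    have hsub : (s.filter (fun v => w ∈ G.neighborFinset v)) ⊆ G.neighborFinset w := by
      intro v hv
      simp only [Finset.mem_filter, SimpleGraph.mem_neighborFinset] at hv ⊢
      exact hv.2.symm
    have hcard : (s.filter (fun v => w ∈ G.neighborFinset v)).card ≤ M :=
      le_trans (Finset.card_le_card hsub) (hM w)
    exact mul_le_mul_of_nonneg_right (by exact_mod_cast hcard) (ha w)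
  calc ∑ w ∈ T, ∑ v ∈ s, (if w ∈ G.neighborFinset v then a w else 0)
      ≤ ∑ w ∈ T, (M : ℝ) * a w := Finset.sum_le_sum step2
    _ = M * ∑ w ∈ T, a w := by rw [Finset.mul_sum]
    _ ≤ M * ∑' v, a v := by
        refine mul_le_mul_of_nonneg_left (Summable.sum_le_tsum T (fun v _ => ha v) hs) (by positivity)

private lemma lem2 (M : ℕ) (hM : ∀ v, G.degree v ≤ M) (a : V → ℝ) (ha : ∀ v, 0 ≤ a v)
    (hs : Summable a) : Summable (fun v => ∑ w ∈ G.neighborFinset v, a w) :=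
  summable_of_sum_le (fun v => Finset.sum_nonneg fun w _ => ha w) (lem1 G M hM a ha hs)

private lemma lem2' (M : ℕ) (hM : ∀ v, G.degree v ≤ M) (a : V → ℝ) (ha : ∀ v, 0 ≤ a v)
    (hs : Summable a) : ∑' v, ∑ w ∈ G.neighborFinset v, a w ≤ M * ∑' v, a v :=
  Summable.tsum_le_of_sum_le (lem2 G M hM a ha hs) (lem1 G M hM a ha hs)

private lemma lem3 (M : ℕ) (hM : ∀ v, G.degree v ≤ M) (τ : V → V → ℂ)
    (hτ : ∀ u v, G.Adj u v → ‖τ u v‖ ≤ 1) (f : V → ℂ) (v : V) :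
    ‖(magLap G τ f v * conj (f v)).re‖
      ≤ (M * (3/2)) * ‖f v‖^2 + (1/2) * ∑ w ∈ G.neighborFinset v, ‖f w‖^2 := by
  have hre : (magLap G τ f v * conj (f v)).re
      = ∑ w ∈ G.neighborFinset v, ((f v - τ w v * f w) * conj (f v)).re := by
    rw [magLap, Finset.sum_mul, Complex.re_sum]
  rw [hre]
  have hterm : ∀ w ∈ G.neighborFinset v, ‖((f v - τ w v * f w) * conj (f v)).re‖
      ≤ (3/2) * ‖f v‖^2 + (1/2) * ‖f w‖^2 := by
    intro w hw
    have hadj : G.Adj w v := ((G.mem_neighborFinset v w).mp hw).symm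
    have h1 : ‖((f v - τ w v * f w) * conj (f v)).re‖ ≤ ‖(f v - τ w v * f w) * conj (f v)‖ :=
      Complex.abs_re_le_norm _
    have h2 : ‖(f v - τ w v * f w) * conj (f v)‖ ≤ (‖f v‖ + ‖f w‖) * ‖f v‖ := by
      rw [norm_mul, RCLike.norm_conj]
      refine mul_le_mul_of_nonneg_right ?_ (norm_nonneg _)
      refine le_trans (norm_sub_le _ _) ?_
      have : ‖τ w v * f w‖ ≤ ‖f w‖ := by
        rw [norm_mul]
        nlinarith [hτ w v hadj, norm_nonneg (f w)]
      linarith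
    nlinarith [norm_nonneg (f v), norm_nonneg (f w), sq_nonneg (‖f v‖ - ‖f w‖)]
  calc ‖∑ w ∈ G.neighborFinset v, ((f v - τ w v * f w) * conj (f v)).re‖
      ≤ ∑ w ∈ G.neighborFinset v, ‖((f v - τ w v * f w) * conj (f v)).re‖ :=
        norm_sum_le _ _
    _ ≤ ∑ w ∈ G.neighborFinset v, ((3/2) * ‖f v‖^2 + (1/2) * ‖f w‖^2) :=
        Finset.sum_le_sum hterm
    _ = (G.degree v : ℝ) * ((3/2) * ‖f v‖^2)
        + (1/2) * ∑ w ∈ G.neighborFinset v, ‖f w‖^2 := by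
        rw [Finset.sum_add_distrib, Finset.sum_const, nsmul_eq_mul, ← Finset.mul_sum]
        rfl
    _ ≤ (M * (3/2)) * ‖f v‖^2 + (1/2) * ∑ w ∈ G.neighborFinset v, ‖f w‖^2 := by
        have : (G.degree v : ℝ) ≤ M := by exact_mod_cast hM v
        nlinarith [sq_nonneg (‖f v‖)]

private lemma lem4 (M : ℕ) (hM : ∀ v, G.degree v ≤ M) (τ : V → V → ℂ)
    (hτ : ∀ u v, G.Adj u v → ‖τ u v‖ ≤ 1) (f : V → ℂ)
    (hf : Summable (fun v => ‖f v‖^2)) :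
    Summable (fun v => ‖(magLap G τ f v * conj (f v)).re‖)
      ∧ ∑' v, ‖(magLap G τ f v * conj (f v)).re‖ ≤ 2 * M * ∑' v, ‖f v‖^2 := by
  have ha : ∀ v, (0:ℝ) ≤ ‖f v‖^2 := fun v => sq_nonneg _
  have hb : Summable (fun v => (M * (3/2)) * ‖f v‖^2
      + (1/2) * ∑ w ∈ G.neighborFinset v, ‖f w‖^2) :=
    ((hf.mul_left _).add ((lem2 G M hM _ ha hf).mul_left _))
  have hs : Summable (fun v => ‖(magLap G τ f v * conj (f v)).re‖) :=
    Summable.of_nonneg_of_le (fun v => norm_nonneg _) (lem3 G M hM τ hτ f) hb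
  refine ⟨hs, ?_⟩
  calc ∑' v, ‖(magLap G τ f v * conj (f v)).re‖
      ≤ ∑' v, ((M * (3/2)) * ‖f v‖^2 + (1/2) * ∑ w ∈ G.neighborFinset v, ‖f w‖^2) :=
        Summable.tsum_le_tsum (lem3 G M hM τ hτ f) hs hb
    _ = (M * (3/2)) * ∑' v, ‖f v‖^2
        + (1/2) * ∑' v, ∑ w ∈ G.neighborFinset v, ‖f w‖^2 := by
        rw [Summable.tsum_add (hf.mul_left _) ((lem2 G M hM _ ha hf).mul_left _),
          tsum_mul_left, tsum_mul_left]
    _ ≤ (M * (3/2)) * ∑' v, ‖f v‖^2 + (1/2) * (M * ∑' v, ‖f v‖^2) := by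
        have := lem2' G M hM _ ha hf
        nlinarith
    _ = 2 * M * ∑' v, ‖f v‖^2 := by ring

end Aux

theorem bottomSpec_lap_le_bottomSpec_magLap {V : Type*} (G : SimpleGraph V)
    [G.LocallyFinite] (M : ℕ) (hM : ∀ v, G.degree v ≤ M)
    (σ : V → V → ℂ) (hσ1 : ∀ u v, G.Adj u v → ‖σ u v‖ = 1)
    (hσ2 : ∀ u v, G.Adj u v → σ u v = conj (σ v u)) :
    bottomSpec (combLapC G) ≤ bottomSpec (magLap G σ) := by
  classical
  have hcomb : ∀ f : V → ℂ, combLapC G f = magLap G (fun _ _ => 1) f := by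
    intro f; funext v; simp [combLapC, magLap]
  have hone : ∀ u v : V, G.Adj u v → ‖(1:ℂ)‖ ≤ 1 := fun _ _ _ => by simp
  have hσ1' : ∀ u v, G.Adj u v → ‖σ u v‖ ≤ 1 := fun u v h => le_of_eq (hσ1 u v h)
  -- square-summability from Memℓp
  have hsq : ∀ f : V → ℂ, Memℓp f 2 → Summable (fun v => ‖f v‖^2) := by
    intro f hf
    have := hf.summable (by norm_num)
    simpa [Real.rpow_natCast] using this
  rcases isEmpty_or_nonempty V with hV | hV
  · have hempty : ∀ L : (V → ℂ) → (V → ℂ),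
        { r : ℝ | ∃ f : V → ℂ, Memℓp f 2 ∧ f ≠ 0 ∧
          r = (∑' v, (L f v * conj (f v)).re) / (∑' v, ‖f v‖ ^ 2) } = ∅ := by
      intro L
      ext r
      simp only [Set.mem_setOf_eq, Set.mem_empty_iff_false, iff_false, not_exists]
      rintro f ⟨_, hf0, _⟩
      exact hf0 (funext fun v => (hV.false v).elim)
    unfold bottomSpec
    rw [hempty, hempty]
  -- bounded below
  have hbdd : ∀ r ∈ { r : ℝ | ∃ f : V → ℂ, Memℓp f 2 ∧ f ≠ 0 ∧
      r = (∑' v, (combLapC G f v * conj (f v)).re) / (∑' v, ‖f v‖ ^ 2) },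
      -(2*M) ≤ r := by
    rintro r ⟨f, hf2, hf0, rfl⟩
    have hsum := hsq f hf2
    obtain ⟨v₀, hv₀⟩ := Function.ne_iff.mp hf0
    simp only [Pi.zero_apply] at hv₀
    have hD : 0 < ∑' v, ‖f v‖^2 :=
      Summable.tsum_pos hsum (fun v => sq_nonneg _) v₀ (pow_pos (norm_pos_iff.mpr hv₀) 2)
    obtain ⟨hS, hB⟩ := lem4 G M hM (fun _ _ => 1) hone f hsum
    rw [le_div_iff₀ hD]
    have hnorm : ‖∑' v, (combLapC G f v * conj (f v)).re‖
        ≤ 2 * M * ∑' v, ‖f v‖^2 := by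
      refine le_trans (norm_tsum_le_tsum_norm ?_) ?_
      · simpa only [hcomb] using hS
      · simpa only [hcomb] using hB
    rw [Real.norm_eq_abs] at hnorm
    have := neg_le_of_abs_le hnorm
    nlinarith
  have hbdd' : BddBelow { r : ℝ | ∃ f : V → ℂ, Memℓp f 2 ∧ f ≠ 0 ∧
      r = (∑' v, (combLapC G f v * conj (f v)).re) / (∑' v, ‖f v‖ ^ 2) } :=
    ⟨-(2*M), hbdd⟩
  -- the magnetic set is nonempty
  obtain ⟨v₀⟩ := hV
  have hwitness : ∃ f : V → ℂ, Memℓp f 2 ∧ f ≠ 0 := by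
    refine ⟨fun v => if v = v₀ then 1 else 0, ?_, ?_⟩
    · refine memℓp_gen ?_
      refine summable_of_ne_finset_zero (s := {v₀}) ?_
      intro v hv
      simp only [Finset.mem_singleton] at hv
      simp [hv]
    · intro h
      have := congrFun h v₀
      simp at this
  obtain ⟨f₀, hf₀2, hf₀0⟩ := hwitness
  apply le_csInf
  · exact ⟨_, f₀, hf₀2, hf₀0, rfl⟩
  rintro r ⟨f, hf2, hf0, rfl⟩
  -- Kato argument with g = |f|
  set g : V → ℂ := fun v => (‖f v‖ : ℂ) with hg
  have hgnorm : ∀ v, ‖g v‖ = ‖f v‖ := by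
    intro v; simp [hg, Complex.norm_real]
  have hsumf := hsq f hf2
  have hsumg : Summable (fun v => ‖g v‖^2) := by
    simpa only [hgnorm] using hsumf
  have hg2 : Memℓp g 2 := by
    refine memℓp_gen ?_
    have : Summable (fun v => ‖g v‖ ^ (2:ℝ)) := by
      simpa [Real.rpow_natCast] using hsumg
    simpa using this
  obtain ⟨v₀', hv₀'⟩ := Function.ne_iff.mp hf0
  simp only [Pi.zero_apply] at hv₀'
  have hg0 : g ≠ 0 := by
    intro h
    have := congrFun h v₀'
    simp only [hg, Pi.zero_apply, Complex.ofReal_eq_zero, norm_eq_zero] at this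
    exact hv₀' this
  have hDeq : ∑' v, ‖g v‖^2 = ∑' v, ‖f v‖^2 := tsum_congr fun v => by rw [hgnorm]
  have hD : 0 < ∑' v, ‖f v‖^2 :=
    Summable.tsum_pos hsumf (fun v => sq_nonneg _) v₀' (pow_pos (norm_pos_iff.mpr hv₀') 2)
  -- pointwise Kato
  have hkato : ∀ v, (combLapC G g v * conj (g v)).re ≤ (magLap G σ f v * conj (f v)).re := by
    intro v
    rw [hcomb]
    have hL : (magLap G (fun _ _ => 1) g v * conj (g v)).re
        = ∑ w ∈ G.neighborFinset v, (‖f v‖^2 - ‖f w‖ * ‖f v‖) := by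
      rw [magLap, Finset.sum_mul, Complex.re_sum]
      refine Finset.sum_congr rfl fun w _ => ?_
      simp only [hg, one_mul, Complex.conj_ofReal, ← Complex.ofReal_sub, ← Complex.ofReal_mul,
        Complex.ofReal_re]
      ring
    have hR : (magLap G σ f v * conj (f v)).re
        = ∑ w ∈ G.neighborFinset v, ((f v - σ w v * f w) * conj (f v)).re := by
      rw [magLap, Finset.sum_mul, Complex.re_sum]
    rw [hL, hR]
    refine Finset.sum_le_sum fun w hw => ?_
    have hadj : G.Adj w v := ((G.mem_neighborFinset v w).mp hw).symm
    have hexp : ((f v - σ w v * f w) * conj (f v)).re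
        = ‖f v‖^2 - (σ w v * f w * conj (f v)).re := by
      have hvv : (f v * conj (f v)).re = ‖f v‖^2 := by
        rw [Complex.mul_conj]
        simp [Complex.normSq_eq_norm_sq, ← Complex.ofReal_pow]
      rw [sub_mul, Complex.sub_re, hvv]
    rw [hexp]
    have : (σ w v * f w * conj (f v)).re ≤ ‖f w‖ * ‖f v‖ := by
      refine le_trans (Complex.re_le_norm _) ?_
      rw [norm_mul, norm_mul, RCLike.norm_conj, hσ1 w v hadj, one_mul]
    linarith
  -- summabilities
  obtain ⟨hSf, _⟩ := lem4 G M hM σ hσ1' f hsumf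
  obtain ⟨hSg, _⟩ := lem4 G M hM (fun _ _ => 1) hone g hsumg
  have hnum : ∑' v, (combLapC G g v * conj (g v)).re
      ≤ ∑' v, (magLap G σ f v * conj (f v)).re := by
    refine Summable.tsum_le_tsum hkato ?_ ?_
    · have := hSg.of_norm
      simpa only [hcomb] using this
    · exact hSf.of_norm
  refine le_trans (csInf_le hbdd' ⟨g, hg2, hg0, rfl⟩) ?_
  rw [hDeq]
  exact (div_le_div_iff_of_pos_right hD).mpr hnum
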